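/- Let n ≥ k ≥ 1, let y_1 ≤ y_2 ≤ ... ≤ y_n be real numbers with Σ_{i=1}^{k} y_i ≥ 0, and let t_1,...,t_n be real numbers with 0 ≤ t_i ≤ 1 for all i and Σ_{i=1}^{n} t_i = k. Then Σ_{i=1}^{n} y_i t_i ≥ 0. -/
import Mathlib


open Finset

/-- The key inequality in the proof of the admissibility lemma (via Farkas' lemma),
with 1-based indexing: if `y_1 ≤ … ≤ y_n`, `Σ_{i=1}^k y_i ≥ 0`, `0 ≤ t_i ≤ 1` and
`Σ_{i=1}^n t_i = k`, then `Σ_{i=1}^n y_i t_i ≥ 0`. -/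
theorem farkas_key_inequality
    (n k : ℕ) (hk1 : 1 ≤ k) (hkn : k ≤ n)
    (y t : ℕ → ℝ)
    (hsorted : ∀ i j, 1 ≤ i → i ≤ j → j ≤ n → y i ≤ y j)
    (hyk : 0 ≤ ∑ i ∈ Finset.Icc 1 k, y i)
    (ht : ∀ i ∈ Finset.Icc 1 n, 0 ≤ t i ∧ t i ≤ 1)
    (hts : ∑ i ∈ Finset.Icc 1 n, t i = k) :
    0 ≤ ∑ i ∈ Finset.Icc 1 n, y i * t i := by
  have hsplit : Finset.Icc 1 n = Finset.Icc 1 k ∪ Finset.Icc (k+1) n := by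
    ext x; simp only [Finset.mem_Icc, Finset.mem_union]; omega
  have hdisj : Disjoint (Finset.Icc 1 k) (Finset.Icc (k+1) n) := by
    simp only [Finset.disjoint_left, Finset.mem_Icc]
    omega
  have hsub1 : Finset.Icc 1 k ⊆ Finset.Icc 1 n := Finset.Icc_subset_Icc_right hkn
  have hsub2 : Finset.Icc (k+1) n ⊆ Finset.Icc 1 n :=
    Finset.Icc_subset_Icc_left (le_trans hk1 (Nat.le_succ k))
  -- lower bound: per-term comparisons with y k
  have h1 : ∀ i ∈ Finset.Icc 1 k, y i + y k * (t i - 1) ≤ y i * t i := by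
    intro i hi
    rw [Finset.mem_Icc] at hi
    have hyik : y i ≤ y k := hsorted i k hi.1 hi.2 hkn
    have hti : t i ≤ 1 := (ht i (hsub1 (Finset.mem_Icc.mpr hi))).2
    nlinarith
  have h2 : ∀ i ∈ Finset.Icc (k+1) n, y k * t i ≤ y i * t i := by
    intro i hi
    rw [Finset.mem_Icc] at hi
    have hyik : y k ≤ y i := hsorted k i hk1 (le_trans (Nat.le_succ k) hi.1) hi.2
    have hti : 0 ≤ t i := (ht i (hsub2 (Finset.mem_Icc.mpr hi))).1
    nlinarith
  have hsum1 : ∑ i ∈ Finset.Icc 1 k, (y i + y k * (t i - 1)) ≤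
      ∑ i ∈ Finset.Icc 1 k, y i * t i := Finset.sum_le_sum h1
  have hsum2 : ∑ i ∈ Finset.Icc (k+1) n, y k * t i ≤
      ∑ i ∈ Finset.Icc (k+1) n, y i * t i := Finset.sum_le_sum h2
  have htot : ∑ i ∈ Finset.Icc 1 n, y i * t i =
      ∑ i ∈ Finset.Icc 1 k, y i * t i + ∑ i ∈ Finset.Icc (k+1) n, y i * t i := by
    rw [hsplit, Finset.sum_union hdisj]
  have hts' : ∑ i ∈ Finset.Icc 1 k, t i + ∑ i ∈ Finset.Icc (k+1) n, t i = k := by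
    rw [← Finset.sum_union hdisj, ← hsplit]; exact hts
  have hcard : (Finset.Icc 1 k).card = k := by simp
  have hlhs : ∑ i ∈ Finset.Icc 1 k, (y i + y k * (t i - 1)) +
      ∑ i ∈ Finset.Icc (k+1) n, y k * t i =
      ∑ i ∈ Finset.Icc 1 k, y i := by
    rw [Finset.sum_add_distrib, ← Finset.mul_sum, ← Finset.mul_sum,
      Finset.sum_sub_distrib, Finset.sum_const, hcard, nsmul_eq_mul, mul_one]
    linear_combination y k * hts'
  linarith [hsum1, hsum2]
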